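/- arXiv:2112.08105 — 8 statements merged into one kernel-verified Lean document; each statement's English description precedes it below -/
import Mathlib

section
/- Let A ∈ L(X), B ∈ L(U,X), C ∈ L(X,Y), D ∈ L(U,Y) be bounded operators between complex Hilbert spaces such that the block operator (x,u) ↦ (Ax + Bu, Cx + Du) from X × U to X × Y is a contraction. Then for every z ∈ ℂ with |z| > 1, the operator zI − A is boundedly invertible and the transfer function satisfies ‖C(zI − A)⁻¹B + D‖ ≤ 1. -/
open scoped ComplexInnerProductSpace
open ContinuousLinearMap

/-- If the block operator `(x,u) ↦ (Ax + Bu, Cx + Du)` is a contraction, then for every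
`z ∈ ℂ` with `|z| > 1`, `zI − A` is boundedly invertible and `‖C(zI − A)⁻¹B + D‖ ≤ 1`. -/
theorem transfer_function_contractive_of_block_contraction
    {U X Y : Type*}
    [NormedAddCommGroup X] [InnerProductSpace ℂ X] [CompleteSpace X]
    [NormedAddCommGroup U] [InnerProductSpace ℂ U] [CompleteSpace U]
    [NormedAddCommGroup Y] [InnerProductSpace ℂ Y] [CompleteSpace Y]
    (A : X →L[ℂ] X) (B : U →L[ℂ] X) (C : X →L[ℂ] Y) (D : U →L[ℂ] Y)
    (hcontr : ∀ (x : X) (u : U),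
      ‖A x + B u‖ ^ 2 + ‖C x + D u‖ ^ 2 ≤ ‖x‖ ^ 2 + ‖u‖ ^ 2)
    (z : ℂ) (hz : 1 < ‖z‖) :
    z ∈ resolventSet ℂ A ∧ ‖C ∘L resolvent A z ∘L B + D‖ ≤ 1 := by
  have hA : ‖A‖ ≤ 1 := by
    refine opNorm_le_bound A zero_le_one fun x => ?_
    have h := hcontr x 0
    simp only [map_zero, add_zero, norm_zero] at h
    have h2 : ‖A x‖ ^ 2 ≤ ‖x‖ ^ 2 := by nlinarith [sq_nonneg ‖C x‖]
    have := Real.sqrt_le_sqrt h2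
    simpa [Real.sqrt_sq (norm_nonneg _)] using this
  have hres : z ∈ resolventSet ℂ A := by
    refine spectrum.mem_resolventSet_of_norm_lt_mul ?_
    have h1 : ‖(1 : X →L[ℂ] X)‖ ≤ 1 := norm_id_le
    nlinarith [norm_nonneg A, norm_nonneg (1 : X →L[ℂ] X)]
  refine ⟨hres, opNorm_le_bound _ zero_le_one fun u => ?_⟩
  set x := (resolvent A z) (B u) with hx
  have hunit : IsUnit (algebraMap ℂ (X →L[ℂ] X) z - A) := hres
  have hcancel : (algebraMap ℂ (X →L[ℂ] X) z - A) x = B u := by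
    have h1 : (algebraMap ℂ (X →L[ℂ] X) z - A) * resolvent A z = 1 := by
      simpa [resolvent] using Ring.mul_inverse_cancel _ hunit
    calc (algebraMap ℂ (X →L[ℂ] X) z - A) x
        = ((algebraMap ℂ (X →L[ℂ] X) z - A) * resolvent A z) (B u) := rfl
      _ = B u := by rw [h1]; rfl
  have hzx : A x + B u = z • x := by
    have : z • x - A x = B u := by
      simpa [ContinuousLinearMap.sub_apply, Algebra.algebraMap_eq_smul_one] using hcancel
    rw [← this]; abel
  have h := hcontr x u
  rw [hzx] at h
  rw [norm_smul] at h
  have h0 : (0:ℝ) ≤ ‖x‖ := norm_nonneg x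
  have h1 : ‖x‖ ≤ ‖z‖ * ‖x‖ := by nlinarith
  have hx2 : ‖x‖ ^ 2 ≤ (‖z‖ * ‖x‖) ^ 2 := pow_le_pow_left₀ h0 h1 2
  have h2 : ‖C x + D u‖ ^ 2 ≤ ‖u‖ ^ 2 := by linarith
  have hfin : ‖C x + D u‖ ≤ ‖u‖ := by
    have := Real.sqrt_le_sqrt h2
    simpa [Real.sqrt_sq (norm_nonneg _)] using this
  simpa [ContinuousLinearMap.add_apply, one_mul] using hfin
end

section
/- Let A ∈ L(X), B ∈ L(U,X), C ∈ L(X,U), D ∈ L(U) be bounded operators on complex Hilbert spaces X and U satisfying the discrete impedance inequality ‖Ax + Bu‖² ≤ ‖x‖² + 2 Re⟨Cx + Du, u⟩ for all x ∈ X, u ∈ U. Then for every z ∈ ℂ with |z| > 1, the operator zI − A is boundedly invertible and the transfer function G_d(z) = C(zI − A)⁻¹B + D satisfies Re⟨G_d(z)u, u⟩ ≥ 0 for all u ∈ U. -/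
open scoped ComplexInnerProductSpace
open ContinuousLinearMap

/-- If `(A,B,C,D)` satisfies the discrete impedance inequality, then for every `z ∈ ℂ` with
`|z| > 1`, `zI − A` is boundedly invertible and the transfer function
`G_d(z) = C(zI − A)⁻¹B + D` satisfies `Re⟨G_d(z)u, u⟩ ≥ 0` for all `u`. -/
theorem transfer_function_positive_of_discrete_impedance
    {U X : Type*}
    [NormedAddCommGroup X] [InnerProductSpace ℂ X] [CompleteSpace X]
    [NormedAddCommGroup U] [InnerProductSpace ℂ U] [CompleteSpace U]
    (A : X →L[ℂ] X) (B : U →L[ℂ] X) (C : X →L[ℂ] U) (D : U →L[ℂ] U)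
    (himp : ∀ (x : X) (u : U),
      ‖A x + B u‖ ^ 2 ≤ ‖x‖ ^ 2 + 2 * (⟪C x + D u, u⟫).re)
    (z : ℂ) (hz : 1 < ‖z‖) :
    z ∈ resolventSet ℂ A ∧
      ∀ u : U, 0 ≤ (⟪(C ∘L resolvent A z ∘L B + D) u, u⟫).re := by
  have hA : ‖A‖ ≤ 1 := by
    refine A.opNorm_le_bound zero_le_one (fun x => ?_)
    have h := himp x 0
    simp only [map_zero, add_zero, inner_zero_right, Complex.zero_re, mul_zero] at h
    rw [one_mul]
    nlinarith [norm_nonneg (A x), norm_nonneg x]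
  have hres : z ∈ resolventSet ℂ A := by
    rcases subsingleton_or_nontrivial X with hX | hX
    · exact isUnit_of_subsingleton _
    · by_contra h
      have hz' : z ∈ spectrum ℂ A := h
      have := spectrum.norm_le_norm_of_mem hz'
      linarith
  refine ⟨hres, fun u => ?_⟩
  have hunit : IsUnit (algebraMap ℂ (X →L[ℂ] X) z - A) := hres
  set x : X := resolvent A z (B u) with hx
  have hcancel : (algebraMap ℂ (X →L[ℂ] X) z - A) * resolvent A z = 1 :=
    Ring.mul_inverse_cancel _ hunit
  have hxx : z • x - A x = B u := by
    have := congrArg (fun T : X →L[ℂ] X => T (B u)) hcancel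
    simpa [mul_apply, Algebra.algebraMap_eq_smul_one, sub_apply, smul_apply, one_apply] using this
  have hAx : A x + B u = z • x := by
    rw [← hxx]; abel
  have h := himp x u
  rw [hAx] at h
  have hn : ‖z • x‖ = ‖z‖ * ‖x‖ := norm_smul z x
  rw [hn] at h
  have happ : (C ∘L resolvent A z ∘L B + D) u = C x + D u := by
    simp [hx]
  rw [happ]
  have h1 : (1:ℝ) ≤ ‖z‖ ^ 2 := by nlinarith
  rw [mul_pow] at h
  nlinarith [sq_nonneg ‖x‖]
end

section
/- Let X, U, Y be complex Hilbert spaces, A ∈ L(X), B ∈ L(U,X), C ∈ L(X,Y), D ∈ L(U,Y), and let α ∈ ρ(A) with Re α > 0. Define the Cayley transform: A_d = (ᾱI + A)(αI − A)⁻¹, B_d = √(2 Re α)(αI − A)⁻¹B, C_d = √(2 Re α) C(αI − A)⁻¹, D_d = C(αI − A)⁻¹B + D. Let z ∈ ℂ with z ≠ −1 and suppose λ = (αz − ᾱ)/(z + 1) ∈ ρ(A). Then z ∈ ρ(A_d) and C_d(zI − A_d)⁻¹B_d + D_d = C(λI − A)⁻¹B + D. -/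
open ContinuousLinearMap

/-- The transfer function of the (internal) Cayley transform at `z` equals the transfer
function of the original system at `λ = (αz − ᾱ)/(z + 1)`. -/
theorem cayley_transform_transfer_function
    {U X Y : Type*}
    [NormedAddCommGroup X] [InnerProductSpace ℂ X] [CompleteSpace X]
    [NormedAddCommGroup U] [InnerProductSpace ℂ U] [CompleteSpace U]
    [NormedAddCommGroup Y] [InnerProductSpace ℂ Y] [CompleteSpace Y]
    (A : X →L[ℂ] X) (B : U →L[ℂ] X) (C : X →L[ℂ] Y) (D : U →L[ℂ] Y)
    (α : ℂ) (hα : α ∈ resolventSet ℂ A) (hre : 0 < α.re)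
    (Ad : X →L[ℂ] X) (Bd : U →L[ℂ] X) (Cd : X →L[ℂ] Y) (Dd : U →L[ℂ] Y)
    (hAd : Ad = (algebraMap ℂ (X →L[ℂ] X) ((starRingEnd ℂ) α) + A) * resolvent A α)
    (hBd : Bd = (Real.sqrt (2 * α.re) : ℂ) • (resolvent A α ∘L B))
    (hCd : Cd = (Real.sqrt (2 * α.re) : ℂ) • (C ∘L resolvent A α))
    (hDd : Dd = C ∘L resolvent A α ∘L B + D)
    (z : ℂ) (hz : z ≠ -1)
    (hlam : (α * z - (starRingEnd ℂ) α) / (z + 1) ∈ resolventSet ℂ A) :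
    z ∈ resolventSet ℂ Ad ∧
      Cd ∘L resolvent Ad z ∘L Bd + Dd =
        C ∘L resolvent A ((α * z - (starRingEnd ℂ) α) / (z + 1)) ∘L B + D := by
  have hz1 : z + 1 ≠ 0 := by
    intro h
    exact hz (by linear_combination h)
  set lam : ℂ := (α * z - (starRingEnd ℂ) α) / (z + 1) with hlamdef
  set a : X →L[ℂ] X := algebraMap ℂ (X →L[ℂ] X) α - A with ha
  set b : X →L[ℂ] X := algebraMap ℂ (X →L[ℂ] X) lam - A with hb
  have hu : IsUnit a := spectrum.mem_resolventSet_iff.mp hα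
  have hv : IsUnit b := spectrum.mem_resolventSet_iff.mp hlam
  set ra : X →L[ℂ] X := Ring.inverse a with hra
  set rb : X →L[ℂ] X := Ring.inverse b with hrb
  have hresa : resolvent A α = ra := rfl
  have hresb : resolvent A lam = rb := rfl
  have haa : a * ra = 1 := Ring.mul_inverse_cancel a hu
  have haa' : ra * a = 1 := Ring.inverse_mul_cancel a hu
  have hbb : b * rb = 1 := Ring.mul_inverse_cancel b hv
  have hbb' : rb * b = 1 := Ring.inverse_mul_cancel b hv
  have h2 : α + (starRingEnd ℂ) α = 2 * (α.re : ℂ) := by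
    rw [Complex.add_conj]; push_cast; ring
  -- key algebraic identity for z I - Ad
  have key1 : algebraMap ℂ (X →L[ℂ] X) z - Ad = ((z + 1) • b) * ra := by
    rw [hAd, hresa]
    have h1 : algebraMap ℂ (X →L[ℂ] X) z = (algebraMap ℂ (X →L[ℂ] X) z * a) * ra := by
      rw [mul_assoc, haa, mul_one]
    rw [h1, ← sub_mul]
    congr 1
    rw [ha, hb]
    simp only [Algebra.algebraMap_eq_smul_one, smul_sub]
    rw [smul_mul_assoc, one_mul]
    match_scalars
    · rw [hlamdef]; field_simp
    · ring
  have hzb : IsUnit ((z + 1) • b) := by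
    rw [Algebra.smul_def]
    exact ((isUnit_iff_ne_zero.mpr hz1).map (algebraMap ℂ (X →L[ℂ] X))).mul hv
  have hunit : IsUnit (algebraMap ℂ (X →L[ℂ] X) z - Ad) := by
    rw [key1]
    exact hzb.mul (isUnit_ringInverse.mpr hu)
  have hzres : z ∈ resolventSet ℂ Ad := spectrum.mem_resolventSet_iff.mpr hunit
  refine ⟨hzres, ?_⟩
  -- compute the resolvent of Ad at z
  have hinv : (algebraMap ℂ (X →L[ℂ] X) z - Ad) * ((z + 1)⁻¹ • (a * rb)) = 1 := by
    rw [key1, smul_mul_assoc, mul_smul_comm, smul_mul_assoc, smul_smul,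
      inv_mul_cancel₀ hz1, one_smul]
    calc b * ra * (a * rb) = b * (ra * a) * rb := by rw [mul_assoc, mul_assoc, mul_assoc]
      _ = 1 := by rw [haa', mul_one, hbb]
  have key2 : resolvent Ad z = (z + 1)⁻¹ • (a * rb) := by
    show Ring.inverse (algebraMap ℂ (X →L[ℂ] X) z - Ad) = (z + 1)⁻¹ • (a * rb)
    calc Ring.inverse (algebraMap ℂ (X →L[ℂ] X) z - Ad)
        = Ring.inverse (algebraMap ℂ (X →L[ℂ] X) z - Ad) *
            ((algebraMap ℂ (X →L[ℂ] X) z - Ad) * ((z + 1)⁻¹ • (a * rb))) := by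
          rw [hinv, mul_one]
      _ = (z + 1)⁻¹ • (a * rb) := by
          rw [← mul_assoc, Ring.inverse_mul_cancel _ hunit, one_mul]
  -- resolvent identity
  have hab : a - b = (α - lam) • (1 : X →L[ℂ] X) := by
    rw [ha, hb]
    simp only [Algebra.algebraMap_eq_smul_one]
    match_scalars <;> ring
  have hαlam : α - lam = 2 * (α.re : ℂ) / (z + 1) := by
    rw [hlamdef]
    field_simp
    linear_combination h2
  have hresid : rb - ra = (α - lam) • (rb * ra) := by
    calc rb - ra = rb * (a * ra) - rb * b * ra := by rw [haa, hbb', mul_one, one_mul]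
      _ = rb * ((a - b) * ra) := by noncomm_ring
      _ = rb * (((α - lam) • (1 : X →L[ℂ] X)) * ra) := by rw [hab]
      _ = (α - lam) • (rb * ra) := by rw [smul_mul_assoc, one_mul, mul_smul_comm]
  -- assemble
  have hs : ((Real.sqrt (2 * α.re) : ℝ) : ℂ) * ((Real.sqrt (2 * α.re) : ℝ) : ℂ)
      = 2 * (α.re : ℂ) := by
    rw [← Complex.ofReal_mul, Real.mul_self_sqrt (by positivity)]
    push_cast; ring
  rw [hCd, hBd, hDd, hresa, hresb, key2]
  simp only [smul_comp, comp_smul, smul_smul]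
  have hc : ((Real.sqrt (2 * α.re) : ℝ) : ℂ) * (z + 1)⁻¹ * ((Real.sqrt (2 * α.re) : ℝ) : ℂ)
      = α - lam := by
    rw [hαlam, div_eq_mul_inv, ← hs]
    ring
  have hcomp : (C.comp ra).comp ((a * rb).comp (ra.comp B)) = C.comp ((rb * ra).comp B) := by
    rw [comp_assoc]
    congr 1
    calc ra.comp ((a * rb).comp (ra.comp B)) = ((ra * (a * rb)) * ra).comp B := by
          simp only [mul_def, comp_assoc]
      _ = (rb * ra).comp B := by rw [← mul_assoc, haa', one_mul]
  rw [hcomp, hc]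
  have : (α - lam) • C.comp ((rb * ra).comp B) = C.comp ((rb - ra).comp B) := by
    rw [hresid, smul_comp, comp_smul]
  rw [this, sub_comp, comp_sub]
  abel
end

section
/- Let X be a complex Hilbert space, A ∈ L(X) and α ∈ ρ(A) with Re α > 0, and let A_d = (ᾱI + A)(αI − A)⁻¹. Then the resolvent set of A_d is ρ(A_d) = { (ᾱ + λ)/(α − λ) : λ ∈ ρ(A), λ ≠ α } ∪ {−1}. -/
/-- The resolvent set of the Cayley transform `A_d = (ᾱI + A)(αI − A)⁻¹` is
`{(ᾱ + λ)/(α − λ) : λ ∈ ρ(A), λ ≠ α} ∪ {−1}`. -/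
theorem resolventSet_cayley_transform
    {X : Type*}
    [NormedAddCommGroup X] [InnerProductSpace ℂ X] [CompleteSpace X]
    (A : X →L[ℂ] X) (α : ℂ) (hα : α ∈ resolventSet ℂ A) (hre : 0 < α.re) :
    resolventSet ℂ ((algebraMap ℂ (X →L[ℂ] X) ((starRingEnd ℂ) α) + A) * resolvent A α) =
      {w : ℂ | ∃ l ∈ resolventSet ℂ A, l ≠ α ∧ w = ((starRingEnd ℂ) α + l) / (α - l)} ∪
        {(-1 : ℂ)} := by
  set f : ℂ →+* (X →L[ℂ] X) := algebraMap ℂ (X →L[ℂ] X) with hf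
  have hu : IsUnit (f α - A) := spectrum.mem_resolventSet_iff.mp hα
  set R := resolvent A α with hR
  have hRmul : R * (f α - A) = 1 := by
    simpa [hR, resolvent] using Ring.inverse_mul_cancel _ hu
  set B := (f ((starRingEnd ℂ) α) + A) * R with hB
  have hsum : α + (starRingEnd ℂ) α ≠ 0 := by
    rw [Complex.add_conj]
    simp only [ne_eq, Complex.ofReal_eq_zero]
    intro h
    linarith
  have key : ∀ w : ℂ, (f w - B) * (f α - A)
      = f (w * α - (starRingEnd ℂ) α) - f (w + 1) * A := by
    intro w
    have hBmul : B * (f α - A) = f ((starRingEnd ℂ) α) + A := by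
      rw [hB, mul_assoc, hRmul, mul_one]
    rw [sub_mul, hBmul, mul_sub, ← map_mul, map_sub, map_add, map_one, add_mul, one_mul]
    abel
  have hiff : ∀ w : ℂ, IsUnit (f w - B) ↔
      IsUnit (f (w * α - (starRingEnd ℂ) α) - f (w + 1) * A) := by
    intro w
    have h1 := Units.isUnit_mul_units (f w - B) hu.unit
    rw [hu.unit_spec] at h1
    rw [← h1, key w]
  have hscal : ∀ (c : ℂ) (x : X →L[ℂ] X), c ≠ 0 → (IsUnit (f c * x) ↔ IsUnit x) := by
    intro c x hc
    have hcu : IsUnit (f c) := (isUnit_iff_ne_zero.2 hc).map f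
    rw [← hcu.unit_spec, Units.isUnit_units_mul]
  have main : ∀ w l : ℂ, w + 1 ≠ 0 → (w + 1) * l = w * α - (starRingEnd ℂ) α →
      (IsUnit (f w - B) ↔ IsUnit (f l - A)) := by
    intro w l hw1 hl
    rw [hiff w, ← hl, map_mul, ← mul_sub]
    exact hscal _ _ hw1
  ext w
  simp only [Set.mem_union, Set.mem_setOf_eq, Set.mem_singleton_iff,
    spectrum.mem_resolventSet_iff, ← hf, ← hR, ← hB]
  constructor
  · intro h
    by_cases hw : w = -1
    · exact Or.inr hw
    · left
      have hw1 : w + 1 ≠ 0 := fun h0 => hw (by linear_combination h0)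
      set l : ℂ := (w * α - (starRingEnd ℂ) α) / (w + 1) with hl
      have hml : (w + 1) * l = w * α - (starRingEnd ℂ) α := by
        rw [hl]; field_simp
      refine ⟨l, (main w l hw1 hml).mp h, ?_, ?_⟩
      · intro hla
        apply hsum
        rw [hla] at hml
        linear_combination hml
      · have hαl : α - l ≠ 0 := by
          intro h0
          apply hsum
          have : l = α := by linear_combination -h0
          rw [this] at hml
          linear_combination hml
        rw [eq_div_iff hαl]
        linear_combination -hml
  · rintro (⟨l, hl, hlα, hwl⟩ | rfl)
    · have hαl : α - l ≠ 0 := sub_ne_zero.2 (Ne.symm hlα)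
      have hw1 : w + 1 ≠ 0 := by
        rw [hwl]
        intro h0
        apply hsum
        rw [div_add' _ _ _ hαl] at h0
        have := (div_eq_zero_iff.mp h0).resolve_right hαl
        linear_combination this
      have hml : (w + 1) * l = w * α - (starRingEnd ℂ) α := by
        rw [hwl]
        field_simp
        ring
      exact (main w l hw1 hml).mpr hl
    · rw [hiff (-1)]
      have e1 : (-1 : ℂ) * α - (starRingEnd ℂ) α = -(α + (starRingEnd ℂ) α) := by ring
      rw [e1]
      simp only [neg_add_cancel, map_zero, zero_mul, sub_zero]
      exact (isUnit_iff_ne_zero.2 (neg_ne_zero.2 hsum)).map f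
end

section
/- Let α ∈ ℂ with Re α > 0, and for each k ∈ ℕ define φ_k : ℝ → ℂ by φ_k(ω) = (√(2 Re α)/(ᾱ + iω)) · ((α − iω)/(ᾱ + iω))^k. Then the family (φ_k) is orthonormal with respect to the inner product (1/(2π))∫_ℝ φ_j(ω) · conj(φ_k(ω)) dω; that is, this integral equals 1 if j = k and 0 if j ≠ k. -/
open MeasureTheory Complex Filter

namespace LagAux

noncomputable def D (α : ℂ) (ω : ℝ) : ℂ := (starRingEnd ℂ) α + Complex.I * ω
noncomputable def w (α : ℂ) (ω : ℝ) : ℂ := (α - Complex.I * ω) / D α ω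
noncomputable def phi (α : ℂ) (k : ℕ) (ω : ℝ) : ℂ :=
  (Real.sqrt (2 * α.re) : ℂ) / D α ω * (w α ω) ^ k
noncomputable def cauchy (α : ℂ) (ω : ℝ) : ℝ := 2 * α.re / ((ω - α.im) ^ 2 + α.re ^ 2)

variable {α : ℂ} (hα : 0 < α.re)

lemma D_re (ω : ℝ) : (D α ω).re = α.re := by
  simp [D]

lemma D_im (ω : ℝ) : (D α ω).im = ω - α.im := by
  simp [D]; ring

include hα

lemma D_ne_zero (ω : ℝ) : D α ω ≠ 0 := by
  intro h
  have := D_re (α := α) ω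
  rw [h] at this
  simp at this
  linarith

lemma conj_D (ω : ℝ) : (starRingEnd ℂ) (D α ω) = α - Complex.I * ω := by
  simp [D, map_add, map_mul, Complex.conj_I, Complex.conj_ofReal]
  ring

lemma conjD_ne_zero (ω : ℝ) : α - Complex.I * ω ≠ 0 := by
  rw [← conj_D hα]
  simpa using D_ne_zero hα ω

lemma w_ne_zero (ω : ℝ) : w α ω ≠ 0 :=
  div_ne_zero (conjD_ne_zero hα ω) (D_ne_zero hα ω)

lemma conj_w (ω : ℝ) : (starRingEnd ℂ) (w α ω) = (w α ω)⁻¹ := by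
  rw [w, map_div₀, conj_D hα, ← conj_D hα (ω := ω), Complex.conj_conj, inv_div]

lemma mul_conjD (ω : ℝ) : D α ω * (α - Complex.I * ω) = (((ω - α.im) ^ 2 + α.re ^ 2 : ℝ) : ℂ) := by
  rw [← conj_D hα, Complex.mul_conj]
  norm_cast
  rw [Complex.normSq_apply, D_re, D_im]
  ring

lemma cauchy_pos (ω : ℝ) : 0 < cauchy α ω := by
  apply div_pos (by linarith)
  positivity

lemma integrand_eq {j k : ℕ} (hjk : k ≤ j) (ω : ℝ) :
    phi α j ω * (starRingEnd ℂ) (phi α k ω) = (cauchy α ω : ℂ) * (w α ω) ^ (j - k) := by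
  have hs : ((Real.sqrt (2 * α.re) : ℂ)) * (starRingEnd ℂ) ((Real.sqrt (2 * α.re) : ℂ))
      = ((2 * α.re : ℝ) : ℂ) := by
    rw [Complex.conj_ofReal, ← Complex.ofReal_mul, Real.mul_self_sqrt (by linarith)]
  rw [phi, phi, map_mul, map_pow, map_div₀, conj_w hα, Complex.conj_ofReal, conj_D hα,
    pow_sub₀ _ (w_ne_zero hα ω) hjk, cauchy]
  have hD := D_ne_zero hα ω
  have hN := conjD_ne_zero hα ω
  have hw := w_ne_zero hα ω
  have hden : (((ω - α.im) ^ 2 + α.re ^ 2 : ℝ) : ℂ) ≠ 0 := by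
    rw [← mul_conjD hα]
    exact mul_ne_zero hD hN
  rw [Complex.ofReal_div, ← mul_conjD hα]
  push_cast
  field_simp
  have h2 : ((Real.sqrt 2 : ℝ) : ℂ) ^ 2 = 2 := by
    rw [← Complex.ofReal_pow, Real.sq_sqrt (by norm_num : (0:ℝ) ≤ 2)]
    norm_num
  have h3 : ((Real.sqrt α.re : ℝ) : ℂ) ^ 2 = (α.re : ℂ) := by
    rw [← Complex.ofReal_pow, Real.sq_sqrt hα.le]
  rw [← Complex.ofReal_pow, Real.sq_sqrt (by linarith), one_div, inv_pow, mul_assoc,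
    inv_mul_cancel₀ (pow_ne_zero _ hw)]
  push_cast
  ring

omit hα in
lemma continuous_D : Continuous (D α) := by
  exact continuous_const.add (continuous_const.mul Complex.continuous_ofReal)

lemma continuous_w : Continuous (w α) := by
  apply Continuous.div
  · exact continuous_const.sub (continuous_const.mul Complex.continuous_ofReal)
  · exact continuous_D
  · exact fun ω => D_ne_zero hα ω

lemma continuous_cauchy : Continuous (cauchy α) := by
  apply Continuous.div continuous_const
  · fun_prop
  · intro ω
    have := hα
    positivity

lemma cauchy_eq (ω : ℝ) :
    cauchy α ω = (2 / α.re) * (1 + ((ω - α.im) / α.re) ^ 2)⁻¹ := by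
  have h1 : α.re ≠ 0 := ne_of_gt hα
  have h2 : (ω - α.im) ^ 2 + α.re ^ 2 ≠ 0 := by positivity
  rw [cauchy, div_pow]
  field_simp
  ring

lemma integrable_cauchy : Integrable (cauchy α) := by
  have h1 : Integrable (fun x : ℝ => (2 / α.re) * (1 + x ^ 2)⁻¹) :=
    integrable_inv_one_add_sq.const_mul _
  have h2 := (h1.comp_div (R := α.re) (ne_of_gt hα)).comp_sub_right α.im
  exact h2.congr (Filter.Eventually.of_forall fun ω => (cauchy_eq hα ω).symm)

lemma integral_cauchy : ∫ ω : ℝ, cauchy α ω = 2 * Real.pi := by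
  have h0 : ∀ ω : ℝ, cauchy α ω = (fun x : ℝ => (2 / α.re) * (1 + (x / α.re) ^ 2)⁻¹) (ω - α.im) :=
    fun ω => cauchy_eq hα ω
  rw [integral_congr_ae (Filter.Eventually.of_forall h0),
    integral_sub_right_eq_self (fun x : ℝ => (2 / α.re) * (1 + (x / α.re) ^ 2)⁻¹) α.im]
  have := MeasureTheory.Measure.integral_comp_div (fun x : ℝ => (2 / α.re) * (1 + x ^ 2)⁻¹) α.re
  rw [this, integral_const_mul, integral_univ_inv_one_add_sq, smul_eq_mul,
    abs_of_pos hα]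
  field_simp

lemma integral_diag (j : ℕ) :
    ∫ ω : ℝ, phi α j ω * (starRingEnd ℂ) (phi α j ω) = 2 * Real.pi := by
  have h : ∀ ω : ℝ, phi α j ω * (starRingEnd ℂ) (phi α j ω) = ((cauchy α ω : ℝ) : ℂ) := by
    intro ω
    rw [integrand_eq hα le_rfl, Nat.sub_self, pow_zero, mul_one]
  rw [integral_congr_ae (Filter.Eventually.of_forall h),
    show (∫ ω : ℝ, ((cauchy α ω : ℝ) : ℂ)) = ((∫ ω : ℝ, cauchy α ω : ℝ) : ℂ) from
      integral_ofReal (𝕜 := ℂ), integral_cauchy hα]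
  push_cast
  ring

omit hα in
lemma D_add (ω : ℝ) : D α ω + (α - Complex.I * ω) = ((2 * α.re : ℝ) : ℂ) := by
  rw [D]
  have h := Complex.add_conj α
  push_cast at h ⊢
  linear_combination h

lemma norm_w (ω : ℝ) : ‖w α ω‖ = 1 := by
  rw [w, norm_div, ← conj_D hα, RCLike.norm_conj, div_self]
  simpa using D_ne_zero hα ω

lemma hasDerivAt_w (ω : ℝ) :
    HasDerivAt (w α) (-((2 * α.re : ℝ) : ℂ) * Complex.I / (D α ω) ^ 2) ω := by
  have hN : HasDerivAt (fun ω : ℝ => α - Complex.I * (ω : ℂ)) (-Complex.I) ω := by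
    simpa using ((Complex.ofRealCLM.hasDerivAt (x := ω)).const_mul Complex.I).const_sub α
  have hD : HasDerivAt (D α) Complex.I ω := by
    refine (((Complex.ofRealCLM.hasDerivAt (x := ω)).const_mul Complex.I).const_add
      ((starRingEnd ℂ) α)).congr_deriv ?_
    simp
  have h := hN.div hD (D_ne_zero hα ω)
  refine HasDerivAt.congr_deriv (f := w α) h ?_
  symm
  rw [div_eq_div_iff (pow_ne_zero 2 (D_ne_zero hα ω)) (pow_ne_zero 2 (D_ne_zero hα ω))]
  have h2 := D_add (α := α) ω
  push_cast at h2 ⊢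
  linear_combination (Complex.I * (D α ω) ^ 2) * h2

lemma cauchy_complex (ω : ℝ) :
    (cauchy α ω : ℂ) = ((2 * α.re : ℝ) : ℂ) / (D α ω * (α - Complex.I * ω)) := by
  rw [cauchy, Complex.ofReal_div, mul_conjD hα]

lemma hasDerivAt_F (m : ℕ) (hm : m ≠ 0) (ω : ℝ) :
    HasDerivAt (fun ω : ℝ => Complex.I / (m : ℂ) * (w α ω) ^ m)
      ((cauchy α ω : ℂ) * (w α ω) ^ m) ω := by
  have hpow := HasDerivAt.comp ω (hasDerivAt_pow m (w α ω)) (hasDerivAt_w hα ω)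
  have h := hpow.const_mul (Complex.I / (m : ℂ))
  simp only [Function.comp_def] at h
  refine h.congr_deriv ?_
  symm
  obtain ⟨n, rfl⟩ := Nat.exists_eq_succ_of_ne_zero hm
  have hD := D_ne_zero hα ω
  have hN := conjD_ne_zero hα ω
  have hcn : ((n : ℂ) + 1) ≠ 0 := Nat.cast_add_one_ne_zero n
  rw [cauchy_complex hα]
  simp only [Nat.succ_sub_one, Nat.succ_eq_add_one]
  rw [pow_succ, w]
  push_cast
  field_simp
  linear_combination (α.re : ℂ) * Complex.I_sq

lemma tendsto_w (l : Filter ℝ) (hl : Tendsto (fun ω : ℝ => ‖D α ω‖) l atTop) :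
    Tendsto (w α) l (nhds (-1)) := by
  have h1 : Tendsto (fun ω : ℝ => (D α ω)⁻¹) l (nhds 0) :=
    tendsto_inv₀_cobounded.comp (tendsto_norm_atTop_iff_cobounded.mp hl)
  have h2 : Tendsto (fun ω : ℝ => ((2 * α.re : ℝ) : ℂ) * (D α ω)⁻¹ - 1) l (nhds (-1)) := by
    have := (h1.const_mul (((2 * α.re : ℝ) : ℂ))).sub_const 1
    simpa using this
  apply h2.congr
  intro ω
  have hD := D_ne_zero hα ω
  have h2 := D_add (α := α) ω
  push_cast at h2
  rw [w, eq_div_iff hD]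
  field_simp
  push_cast
  linear_combination -h2

omit hα in
lemma tendsto_normD_atTop : Tendsto (fun ω : ℝ => ‖D α ω‖) atTop atTop := by
  apply tendsto_atTop_mono (f := fun ω : ℝ => |ω - α.im|)
  · intro ω
    rw [← D_im (α := α) ω]
    exact Complex.abs_im_le_norm _
  · have := tendsto_abs_atTop_atTop.comp
      (tendsto_atTop_add_const_right atTop (-α.im) (tendsto_id (α := ℝ)))
    simpa [sub_eq_add_neg, Function.comp_def] using this

omit hα in
lemma tendsto_normD_atBot : Tendsto (fun ω : ℝ => ‖D α ω‖) atBot atTop := by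
  apply tendsto_atTop_mono (f := fun ω : ℝ => |ω - α.im|)
  · intro ω
    rw [← D_im (α := α) ω]
    exact Complex.abs_im_le_norm _
  · have := tendsto_abs_atBot_atTop.comp
      (tendsto_atBot_add_const_right atBot (-α.im) (tendsto_id (α := ℝ)))
    simpa [sub_eq_add_neg, Function.comp_def] using this

lemma integral_offdiag {j k : ℕ} (hjk : k < j) :
    ∫ ω : ℝ, phi α j ω * (starRingEnd ℂ) (phi α k ω) = 0 := by
  set m := j - k with hm
  have hm0 : m ≠ 0 := Nat.sub_ne_zero_of_lt hjk
  have hint : Integrable (fun ω : ℝ => (cauchy α ω : ℂ) * (w α ω) ^ m) := by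
    apply (integrable_cauchy hα).mono'
    · exact ((Complex.continuous_ofReal.comp (continuous_cauchy hα)).mul
        ((continuous_w hα).pow m)).aestronglyMeasurable
    · filter_upwards with ω
      rw [norm_mul, norm_pow, norm_w hα, one_pow, mul_one, Complex.norm_real,
        Real.norm_eq_abs, abs_of_pos (cauchy_pos hα ω)]
  have htop : Tendsto (fun ω : ℝ => Complex.I / (m : ℂ) * (w α ω) ^ m) atTop
      (nhds (Complex.I / (m : ℂ) * (-1) ^ m)) :=
    (((tendsto_w hα atTop tendsto_normD_atTop).pow m).const_mul _)
  have hbot : Tendsto (fun ω : ℝ => Complex.I / (m : ℂ) * (w α ω) ^ m) atBot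
      (nhds (Complex.I / (m : ℂ) * (-1) ^ m)) :=
    (((tendsto_w hα atBot tendsto_normD_atBot).pow m).const_mul _)
  have key := integral_of_hasDerivAt_of_tendsto
    (fun ω => hasDerivAt_F hα m hm0 ω) hint hbot htop
  rw [sub_self] at key
  rw [integral_congr_ae (Filter.Eventually.of_forall fun ω => integrand_eq hα hjk.le ω)]
  exact key

end LagAux

/-- The functions `φ_k(ω) = (√(2 Re α)/(ᾱ + iω)) ((α − iω)/(ᾱ + iω))^k` form an orthonormal
family with respect to the inner product `(1/(2π)) ∫_ℝ φ_j(ω) conj(φ_k(ω)) dω`. -/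
theorem laguerre_family_orthonormal
    (α : ℂ) (hα : 0 < α.re) (j k : ℕ) :
    (1 / (2 * Real.pi) : ℂ) *
        ∫ ω : ℝ,
          (((Real.sqrt (2 * α.re) : ℂ) / ((starRingEnd ℂ) α + Complex.I * (ω : ℂ))) *
              ((α - Complex.I * (ω : ℂ)) / ((starRingEnd ℂ) α + Complex.I * (ω : ℂ))) ^ j) *
            (starRingEnd ℂ)
              (((Real.sqrt (2 * α.re) : ℂ) / ((starRingEnd ℂ) α + Complex.I * (ω : ℂ))) *
                ((α - Complex.I * (ω : ℂ)) / ((starRingEnd ℂ) α + Complex.I * (ω : ℂ))) ^ k) =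
      if j = k then 1 else 0 := by
  show (1 / (2 * Real.pi) : ℂ) *
      ∫ ω : ℝ, LagAux.phi α j ω * (starRingEnd ℂ) (LagAux.phi α k ω) = _
  have hπ : ((Real.pi : ℝ) : ℂ) ≠ 0 := by exact_mod_cast Real.pi_ne_zero
  rcases eq_or_ne j k with rfl | hne
  · rw [LagAux.integral_diag hα, if_pos rfl]
    field_simp
  · rw [if_neg hne]
    rcases hne.lt_or_gt with h | h
    · have hpt : ∀ ω : ℝ, LagAux.phi α j ω * (starRingEnd ℂ) (LagAux.phi α k ω)
          = (starRingEnd ℂ) (LagAux.phi α k ω * (starRingEnd ℂ) (LagAux.phi α j ω)) := by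
        intro ω
        rw [map_mul, Complex.conj_conj]
        ring
      rw [integral_congr_ae (Filter.Eventually.of_forall hpt), integral_conj,
        LagAux.integral_offdiag hα h, map_zero, mul_zero]
    · rw [LagAux.integral_offdiag hα h, mul_zero]
end

section
/- Let X, U be complex Hilbert spaces and let (A,B,C,D) with A ∈ L(X), B ∈ L(U,X), C ∈ L(X,U), D ∈ L(U) satisfy the discrete impedance inequality ‖Ax + Bu‖² ≤ ‖x‖² + 2 Re⟨Cx + Du, u⟩ for all x ∈ X, u ∈ U. Let k > 0 and assume I + kD is boundedly invertible. Define A^s = A − kB(I + kD)⁻¹C, B^s = √(2k) B(I + kD)⁻¹, C^s = −√(2k) (I + kD)⁻¹C, D^s = (I − kD)(I + kD)⁻¹. Then the block operator (x,u) ↦ (A^s x + B^s u, C^s x + D^s u) on X × U is a contraction; i.e. the diagonal (external Cayley) transformation of an impedance passive discrete-time system is scattering passive. -/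
open scoped ComplexInnerProductSpace
open ContinuousLinearMap

/-- The diagonal (external Cayley) transformation of an impedance passive discrete-time
system is scattering passive: the transformed block operator is a contraction. -/
theorem diagonal_transform_scattering_passive
    {X U : Type*}
    [NormedAddCommGroup X] [InnerProductSpace ℂ X] [CompleteSpace X]
    [NormedAddCommGroup U] [InnerProductSpace ℂ U] [CompleteSpace U]
    (A : X →L[ℂ] X) (B : U →L[ℂ] X) (C : X →L[ℂ] U) (D : U →L[ℂ] U)
    (himp : ∀ (x : X) (u : U),
      ‖A x + B u‖ ^ 2 ≤ ‖x‖ ^ 2 + 2 * (⟪C x + D u, u⟫).re)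
    (k : ℝ) (hk : 0 < k)
    (hD : IsUnit (1 + (k : ℂ) • D))
    (As : X →L[ℂ] X) (Bs : U →L[ℂ] X) (Cs : X →L[ℂ] U) (Ds : U →L[ℂ] U)
    (hAs : As = A - (k : ℂ) • (B ∘L Ring.inverse (1 + (k : ℂ) • D) ∘L C))
    (hBs : Bs = (Real.sqrt (2 * k) : ℂ) • (B ∘L Ring.inverse (1 + (k : ℂ) • D)))
    (hCs : Cs = -((Real.sqrt (2 * k) : ℂ) • (Ring.inverse (1 + (k : ℂ) • D) ∘L C)))
    (hDs : Ds = (1 - (k : ℂ) • D) * Ring.inverse (1 + (k : ℂ) • D)) :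
    ∀ (x : X) (u : U),
      ‖As x + Bs u‖ ^ 2 + ‖Cs x + Ds u‖ ^ 2 ≤ ‖x‖ ^ 2 + ‖u‖ ^ 2 := by

  intro x u
  set s : ℝ := Real.sqrt (2 * k) with hs_def
  have hs2 : s ^ 2 = 2 * k := Real.sq_sqrt (by linarith)
  have hs0 : 0 < s := Real.sqrt_pos.mpr (by linarith)
  set T : U →L[ℂ] U := 1 + (k : ℂ) • D with hT
  set E : U →L[ℂ] U := Ring.inverse T with hEdef
  have hTE : T * E = 1 := Ring.mul_inverse_cancel T hD
  have hTE' : ∀ z : U, E z + (k : ℂ) • D (E z) = z := by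
    intro z
    have := congrArg (fun f : U →L[ℂ] U => f z) hTE
    simpa [hT, ContinuousLinearMap.add_apply, ContinuousLinearMap.smul_apply,
      ContinuousLinearMap.mul_apply] using this
  set w : U := E ((s : ℂ) • u - (k : ℂ) • C x) with hw
  set y : U := C x + D w with hy
  have hs2' : (s : ℂ) * (s : ℂ) = 2 * (k : ℂ) := by
    exact_mod_cast congrArg Complex.ofReal (show s * s = 2 * k by nlinarith)
  have hkDw : (k : ℂ) • D w = (s : ℂ) • u - (k : ℂ) • C x - w := by
    have h := hTE' ((s : ℂ) • u - (k : ℂ) • C x)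
    rw [← hw] at h
    linear_combination (norm := module) h
  have hkDEu : (k : ℂ) • D (E u) = u - E u := by
    have h := hTE' u
    linear_combination (norm := module) h
  have h2 : (s : ℂ) • u = w + (k : ℂ) • y := by
    rw [hy, smul_add, hkDw]
    module
  have hP : As x + Bs u = A x + B w := by
    rw [hAs, hBs, hw]
    simp only [ContinuousLinearMap.sub_apply, ContinuousLinearMap.smul_apply,
      ContinuousLinearMap.comp_apply, map_sub, map_smul]
    module
  have hQ : (s : ℂ) • (Cs x + Ds u) = w - (k : ℂ) • y := by
    rw [hCs, hDs, hy]
    simp only [ContinuousLinearMap.neg_apply, ContinuousLinearMap.smul_apply,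
      ContinuousLinearMap.comp_apply, ContinuousLinearMap.mul_apply,
      ContinuousLinearMap.sub_apply, ContinuousLinearMap.one_apply]
    rw [hkDEu, show ((k : ℂ)) • (C x + D w) = (k : ℂ) • C x + (k : ℂ) • D w from
      smul_add _ _ _, hkDw, hw]
    simp only [map_sub, map_smul]
    match_scalars <;>
      first
        | ring1
        | linear_combination hs2'
        | linear_combination -hs2'
  -- now the norm computation
  have hnu : 2 * k * ‖u‖ ^ 2 = ‖w + (k : ℂ) • y‖ ^ 2 := by
    rw [← h2, norm_smul, Complex.norm_real, Real.norm_eq_abs, abs_of_pos hs0, mul_pow, hs2]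
  have hnQ : 2 * k * ‖Cs x + Ds u‖ ^ 2 = ‖w - (k : ℂ) • y‖ ^ 2 := by
    rw [← hQ, norm_smul, Complex.norm_real, Real.norm_eq_abs, abs_of_pos hs0, mul_pow, hs2]
  have hdiff : ‖w + (k : ℂ) • y‖ ^ 2 - ‖w - (k : ℂ) • y‖ ^ 2
      = 4 * k * (⟪y, w⟫).re := by
    have hsym : (⟪w, y⟫ : ℂ).re = (⟪y, w⟫ : ℂ).re := by
      simpa using inner_re_symm (𝕜 := ℂ) w y
    rw [@norm_add_sq ℂ, @norm_sub_sq ℂ]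
    simp only [inner_smul_right, RCLike.re_to_complex, Complex.re_ofReal_mul, hsym]
    ring
  have himp' : ‖A x + B w‖ ^ 2 ≤ ‖x‖ ^ 2 + 2 * (⟪y, w⟫).re := by
    simpa [hy] using himp x w
  have hQ2 : ‖u‖ ^ 2 - ‖Cs x + Ds u‖ ^ 2 = 2 * (⟪y, w⟫).re := by
    have h6 : 2 * k * (‖u‖ ^ 2 - ‖Cs x + Ds u‖ ^ 2) = 2 * k * (2 * (⟪y, w⟫).re) := by
      linarith
    have := mul_left_cancel₀ (show (2 * k : ℝ) ≠ 0 by positivity) h6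
    linarith
  rw [hP]
  linarith
end

section
/- Let X, U be complex Hilbert spaces, A₀ ∈ L(X) with ker(I + A₀) = {0}, B₀ ∈ L(U,X), C₀ ∈ L(X,U), D₀ ∈ L(U), and k > 0 with I + kD₀ boundedly invertible. Define A^s = A₀ − kB₀(I + kD₀)⁻¹C₀, B^s = √(2k) B₀(I + kD₀)⁻¹, C^s = −√(2k) (I + kD₀)⁻¹C₀, D^s = (I − kD₀)(I + kD₀)⁻¹, and assume the block operator (x,u) ↦ (A^s x + B^s u, C^s x + D^s u) on X × U is a contraction. Then ker(I + A^s) = {0}, i.e. −1 is not an eigenvalue of A^s. -/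
open ContinuousLinearMap

/-- If `−1` is not an eigenvalue of `A₀` and the diagonal-transformed block operator is a
contraction, then `−1` is not an eigenvalue of `A^s = A₀ − kB₀(I + kD₀)⁻¹C₀`. -/
theorem neg_one_not_eigenvalue_of_diagonal_transform
    {X U : Type*}
    [NormedAddCommGroup X] [InnerProductSpace ℂ X] [CompleteSpace X]
    [NormedAddCommGroup U] [InnerProductSpace ℂ U] [CompleteSpace U]
    (A₀ : X →L[ℂ] X) (B₀ : U →L[ℂ] X) (C₀ : X →L[ℂ] U) (D₀ : U →L[ℂ] U)
    (hker : ∀ x : X, x + A₀ x = 0 → x = 0)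
    (k : ℝ) (hk : 0 < k)
    (hD : IsUnit (1 + (k : ℂ) • D₀))
    (As : X →L[ℂ] X) (Bs : U →L[ℂ] X) (Cs : X →L[ℂ] U) (Ds : U →L[ℂ] U)
    (hAs : As = A₀ - (k : ℂ) • (B₀ ∘L Ring.inverse (1 + (k : ℂ) • D₀) ∘L C₀))
    (hBs : Bs = (Real.sqrt (2 * k) : ℂ) • (B₀ ∘L Ring.inverse (1 + (k : ℂ) • D₀)))
    (hCs : Cs = -((Real.sqrt (2 * k) : ℂ) • (Ring.inverse (1 + (k : ℂ) • D₀) ∘L C₀)))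
    (hDs : Ds = (1 - (k : ℂ) • D₀) * Ring.inverse (1 + (k : ℂ) • D₀))
    (hcontr : ∀ (x : X) (u : U),
      ‖As x + Bs u‖ ^ 2 + ‖Cs x + Ds u‖ ^ 2 ≤ ‖x‖ ^ 2 + ‖u‖ ^ 2) :
    ∀ x : X, x + As x = 0 → x = 0 := by
  intro x hx
  have hAsx : As x = -x := by
    exact eq_neg_of_add_eq_zero_right hx
  -- Step 1: Cs x = 0 from contraction with u = 0
  have h1 := hcontr x 0
  simp only [map_zero, add_zero, norm_zero] at h1
  rw [hAsx, norm_neg] at h1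
  have hCsx : Cs x = 0 := by
    have : ‖Cs x‖ ^ 2 ≤ 0 := by linarith
    have : ‖Cs x‖ = 0 := by nlinarith [norm_nonneg (Cs x)]
    exact norm_eq_zero.mp this
  -- Step 2: Ring.inverse (1 + k•D₀) (C₀ x) = 0
  have hsqrt : (Real.sqrt (2 * k) : ℂ) ≠ 0 := by
    simp only [ne_eq, Complex.ofReal_eq_zero]
    positivity
  have hinv : Ring.inverse (1 + (k : ℂ) • D₀) (C₀ x) = 0 := by
    rw [hCs] at hCsx
    simp only [neg_apply, smul_apply, neg_eq_zero, smul_eq_zero, comp_apply] at hCsx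
    rcases hCsx with h | h
    · exact absurd h hsqrt
    · exact h
  -- Step 3: As x = A₀ x
  have hAx : As x = A₀ x := by
    rw [hAs]
    simp only [sub_apply, smul_apply, comp_apply, hinv, map_zero, smul_zero, sub_zero]
  exact hker x (by rw [hAx] at hx; exact hx)
end

section
/- Let X, U, Y be complex Hilbert spaces, A ∈ L(X), B ∈ L(U,X), C ∈ L(X,Y), D ∈ L(U,Y) and K ∈ L(Y,U) with I − DK boundedly invertible, and define the closed-loop generator A^K = A + BK(I − DK)⁻¹C and the transfer function G(λ) = C(λI − A)⁻¹B + D for λ ∈ ρ(A). Then for every λ ∈ ρ(A): λ ∈ ρ(A^K) if and only if I − KG(λ) is boundedly invertible. -/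
open ContinuousLinearMap

lemma aux_one_sub_comp {X U : Type*}
    [NormedAddCommGroup X] [NormedSpace ℂ X]
    [NormedAddCommGroup U] [NormedSpace ℂ U]
    (P : U →L[ℂ] X) (Q : X →L[ℂ] U)
    (h : IsUnit (1 - P ∘L Q)) : IsUnit (1 - Q ∘L P) := by
  obtain ⟨u, hu⟩ := h
  set c : X →L[ℂ] X := ((u⁻¹ : (X →L[ℂ] X)ˣ) : X →L[ℂ] X) with hcdef
  have h1 : (1 - P ∘L Q) * c = 1 := by rw [← hu]; exact u.mul_inv
  have h2 : c * (1 - P ∘L Q) = 1 := by rw [← hu]; exact u.inv_mul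
  have hc : P ∘L (Q ∘L c) = c - 1 := by
    rw [mul_def] at h1
    simp only [sub_comp, one_def, id_comp, comp_assoc] at h1 ⊢
    linear_combination (norm := abel) -h1
  have hc2 : c ∘L (P ∘L Q) = c - 1 := by
    rw [mul_def] at h2
    simp only [comp_sub, one_def, comp_id, comp_assoc] at h2 ⊢
    linear_combination (norm := abel) -h2
  have hcP : P ∘L (Q ∘L (c ∘L P)) = c ∘L P - P := by
    have := congrArg (fun t => t ∘L P) hc
    simpa only [comp_assoc, sub_comp, one_def, id_comp] using this
  have hcQ : Q ∘L (c ∘L (P ∘L Q)) = Q ∘L c - Q := by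
    have := congrArg (fun t => Q ∘L t) hc2
    simpa only [comp_sub, one_def, comp_id] using this
  refine isUnit_iff_exists.mpr ⟨1 + Q ∘L (c ∘L P), ?_, ?_⟩
  · rw [mul_def]
    simp only [comp_add, add_comp, sub_comp, comp_sub, one_def, id_comp, comp_id, comp_assoc, hcP]
    abel
  · rw [mul_def]
    simp only [comp_add, add_comp, sub_comp, comp_sub, one_def, id_comp, comp_id, comp_assoc]
    rw [show Q ∘L (c ∘L (P ∘L (Q ∘L P))) = (Q ∘L (c ∘L (P ∘L Q))) ∘L P by simp [comp_assoc], hcQ]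
    simp only [sub_comp, comp_assoc]
    abel


/-- For `λ ∈ ρ(A)`: `λ ∈ ρ(A^K)` if and only if `I − KG(λ)` is boundedly invertible, where
`A^K = A + BK(I − DK)⁻¹C` and `G(λ) = C(λI − A)⁻¹B + D`. -/
theorem closed_loop_spectrum_characterization
    {X U Y : Type*}
    [NormedAddCommGroup X] [InnerProductSpace ℂ X] [CompleteSpace X]
    [NormedAddCommGroup U] [InnerProductSpace ℂ U] [CompleteSpace U]
    [NormedAddCommGroup Y] [InnerProductSpace ℂ Y] [CompleteSpace Y]
    (A : X →L[ℂ] X) (B : U →L[ℂ] X) (C : X →L[ℂ] Y) (D : U →L[ℂ] Y) (K : Y →L[ℂ] U)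
    (hDK : IsUnit (1 - D ∘L K))
    (lam : ℂ) (hlam : lam ∈ resolventSet ℂ A) :
    lam ∈ resolventSet ℂ (A + B ∘L K ∘L Ring.inverse (1 - D ∘L K) ∘L C) ↔
      IsUnit (1 - K ∘L (C ∘L resolvent A lam ∘L B + D)) := by
  have hM : IsUnit (algebraMap ℂ (X →L[ℂ] X) lam - A) := hlam
  set M : X →L[ℂ] X := algebraMap ℂ (X →L[ℂ] X) lam - A with hMdef
  set E : Y →L[ℂ] Y := Ring.inverse (1 - D ∘L K) with hEdef
  set R : X →L[ℂ] X := resolvent A lam with hRdef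
  have hRinv : R = Ring.inverse M := rfl
  have hMR : M * R = 1 := by rw [hRinv]; exact Ring.mul_inverse_cancel M hM
  have hDKE : (1 - D ∘L K) ∘L E = 1 := by
    rw [← mul_def, hEdef]; exact Ring.mul_inverse_cancel _ hDK
  have hKD : IsUnit (1 - K ∘L D) := aux_one_sub_comp D K hDK
  -- (1 - KD)(KE) = K
  have hKE : (1 - K ∘L D) ∘L (K ∘L E) = K := by
    have h := congrArg (fun t => K ∘L t) hDKE
    simp only [comp_sub, comp_id, one_def, id_comp, comp_assoc] at h ⊢
    simp only [sub_comp, comp_sub, comp_assoc, id_comp] at h ⊢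
    linear_combination (norm := abel) h
  set F : X →L[ℂ] X := B ∘L K ∘L E ∘L C with hFdef
  have key : M * (1 - R ∘L F) = M - F := by
    rw [mul_sub, mul_one, ← mul_def R F, ← mul_assoc, hMR, one_mul]
  have step1 : lam ∈ resolventSet ℂ (A + F) ↔ IsUnit (1 - R ∘L F) := by
    have h1 : algebraMap ℂ (X →L[ℂ] X) lam - (A + F) = M - F := by
      rw [hMdef]; abel
    have h2 := Units.isUnit_units_mul hM.unit (1 - R ∘L F)
    rw [hM.unit_spec, key] at h2
    simp only [resolventSet, Set.mem_setOf_eq, h1]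
    exact h2
  have step2 : IsUnit (1 - R ∘L F) ↔ IsUnit (1 - (K ∘L (E ∘L C)) ∘L (R ∘L B)) := by
    have hassoc : R ∘L F = (R ∘L B) ∘L (K ∘L (E ∘L C)) := by
      simp only [hFdef, comp_assoc]
    rw [hassoc]
    exact ⟨aux_one_sub_comp _ _, aux_one_sub_comp _ _⟩
  have hstep : (1 - K ∘L D) ∘L ((K ∘L (E ∘L C)) ∘L (R ∘L B)) = K ∘L (C ∘L (R ∘L B)) := by
    have h := congrArg (fun t => t ∘L (C ∘L (R ∘L B))) hKE
    simpa only [comp_assoc] using h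
  have hfact : (1 - K ∘L D) * (1 - (K ∘L (E ∘L C)) ∘L (R ∘L B))
      = 1 - K ∘L (C ∘L R ∘L B + D) := by
    rw [mul_def]
    simp only [comp_sub, comp_add, sub_comp, one_def, comp_id, id_comp, comp_assoc] at hstep ⊢
    rw [hstep]
    abel
  have step3 : IsUnit (1 - (K ∘L (E ∘L C)) ∘L (R ∘L B))
      ↔ IsUnit (1 - K ∘L (C ∘L R ∘L B + D)) := by
    have h2 := Units.isUnit_units_mul hKD.unit (1 - (K ∘L (E ∘L C)) ∘L (R ∘L B))
    rw [hKD.unit_spec, hfact] at h2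
    exact h2.symm
  exact (step1.trans step2).trans step3
end
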